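/- arXiv:math/0105022 — 4 statements merged into one kernel-verified Lean document; each statement's English description precedes it below -/
import Mathlib

section
/- Fix k ≥ 4 and write k = 2i + r with r ∈ {0,1}, i ≥ 2. For every N ≥ 1, the number Φ_k(N) of natural numbers n ≤ N that are k-palindromic in some base b ≥ 2 satisfies Φ_k(N) ≤ 4·(N+1)^{(i+r+1)/k}. -/
def IsKPalin (b k n : ℕ) : Prop :=
  2 ≤ b ∧ (Nat.digits b n).length = k ∧ (Nat.digits b n).Palindrome

lemma palin_facts {b k i r n : ℕ} (hk : 4 ≤ k) (hi : 2 ≤ i) (hkir : k = 2 * i + r)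
    (h : IsKPalin b k n) :
    b ^ (i + r - 1) ≤ n / b ^ i ∧ n / b ^ i < b ^ (i + r) ∧ b ≤ n := by
  obtain ⟨hb, hlen, hpal⟩ := h
  have hb1 : 1 < b := hb
  have hn0 : n ≠ 0 := by intro h0; rw [h0] at hlen; simp at hlen; omega
  have hup : n < b ^ k := by rw [← hlen]; exact Nat.lt_base_pow_length_digits hb1
  have hlow : b ^ (k - 1) ≤ n := by
    have h1 : b ^ k ≤ b * n := by rw [← hlen]; exact Nat.base_pow_length_digits_le b n hb1 hn0
    have h2 : b * b ^ (k - 1) = b ^ k := by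
      rw [← pow_succ']
      congr 1
      omega
    exact Nat.le_of_mul_le_mul_left (by omega) (by omega : 0 < b)
  refine ⟨?_, ?_, ?_⟩
  · rw [Nat.le_div_iff_mul_le (pow_pos (by omega : 0 < b) i)]
    calc b ^ (i + r - 1) * b ^ i = b ^ (k - 1) := by rw [← pow_add]; congr 1; omega
      _ ≤ n := hlow
  · rw [Nat.div_lt_iff_lt_mul (pow_pos (by omega : 0 < b) i)]
    calc n < b ^ k := hup
      _ = b ^ (i + r) * b ^ i := by rw [← pow_add]; congr 1; omega
  · calc b = b ^ 1 := (pow_one b).symm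
      _ ≤ b ^ (k - 1) := Nat.pow_le_pow_right (by omega) (by omega)
      _ ≤ n := hlow


lemma recon {b k i r n : ℕ} (hb : 2 ≤ b) (hkir : k = 2 * i + r) (hr : r ≤ 1) (hi : 2 ≤ i)
    (hlen : (Nat.digits b n).length = k) (hpal : (Nat.digits b n).Palindrome) :
    Nat.ofDigits b (((Nat.digits b (n / b ^ i)).drop r).reverse) + b ^ i * (n / b ^ i) = n := by
  have hb1 : 1 < b := hb
  set L := Nat.digits b n with hL
  have hm : n / b ^ i = Nat.ofDigits b (L.drop i) := Nat.self_div_pow_eq_ofDigits_drop i n hb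
  have hn0 : n ≠ 0 := by
    intro h
    rw [hL, h] at hlen
    simp at hlen
    omega
  have hdropne : L.drop i ≠ [] := by
    intro h
    have := congrArg List.length h
    simp [hlen] at this
    omega
  have hDm : Nat.digits b (n / b ^ i) = L.drop i := by
    rw [hm]
    refine Nat.digits_ofDigits b hb1 _ (fun l hl => Nat.digits_lt_base hb1 (List.mem_of_mem_drop hl)) ?_
    intro h
    rw [List.getLast_drop]
    exact Nat.getLast_digit_ne_zero b hn0
  have htake : L.take i = ((L.drop i).drop r).reverse := by
    rw [List.drop_drop, List.reverse_drop, hpal.reverse_eq, hlen]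
    congr 1
    omega
  calc Nat.ofDigits b (((Nat.digits b (n / b ^ i)).drop r).reverse) + b ^ i * (n / b ^ i)
      = Nat.ofDigits b (L.take i) + b ^ i * Nat.ofDigits b (L.drop i) := by rw [hDm, ← hm, ← htake]
    _ = Nat.ofDigits b (L.take i ++ L.drop i) := by
        rw [Nat.ofDigits_append, List.length_take, min_eq_left (by omega : i ≤ L.length)]
    _ = n := by rw [List.take_append_drop]; exact Nat.ofDigits_digits b n


lemma tele (m0 N : ℕ) (hm : 2 ≤ m0) :
    ∑ b ∈ Finset.Icc m0 N, (1:ℝ)/((b:ℝ)*((b:ℝ)-1)) ≤ 1/((m0:ℝ)-1) := by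
  rw [← Finset.Ico_add_one_right_eq_Icc, Finset.sum_Ico_eq_sum_range]
  have key : ∀ j ∈ Finset.range (N + 1 - m0),
      (1:ℝ)/(((m0 + j : ℕ):ℝ)*(((m0 + j : ℕ):ℝ)-1))
        = (fun j : ℕ => 1/((m0:ℝ) - 1 + j)) j - (fun j : ℕ => 1/((m0:ℝ) - 1 + j)) (j+1) := by
    intro j _
    have hm2 : (2:ℝ) ≤ (m0:ℝ) := by exact_mod_cast hm
    have hj : (0:ℝ) ≤ (j:ℝ) := Nat.cast_nonneg j
    simp only []
    push_cast
    have h1 : ((m0:ℝ) + j) - 1 ≠ 0 := by linarith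
    have h0 : ((m0:ℝ) + j) ≠ 0 := by linarith
    have h1' : (m0:ℝ) - 1 + j ≠ 0 := by linarith
    have h2' : (m0:ℝ) - 1 + ((j:ℝ)+1) ≠ 0 := by linarith
    field_simp
    ring
  rw [Finset.sum_congr rfl key, Finset.sum_range_sub']
  have hm2 : (2:ℝ) ≤ (m0:ℝ) := by exact_mod_cast hm
  have h3 : (0:ℝ) ≤ 1/((m0:ℝ) - 1 + ((N + 1 - m0 : ℕ):ℝ)) := by
    have hj : (0:ℝ) ≤ ((N + 1 - m0 : ℕ):ℝ) := Nat.cast_nonneg _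
    apply div_nonneg zero_le_one
    linarith
  simp only [Nat.cast_zero, add_zero] at h3 ⊢
  linarith

lemma card_bound (k i r N : ℕ) (hk : 4 ≤ k) (hr : r ≤ 1) (hi : 2 ≤ i)
    (hkir : k = 2 * i + r) :
    {n : ℕ | n ≤ N ∧ ∃ b : ℕ, IsKPalin b k n}.ncard
      ≤ ∑ b ∈ Finset.Icc 2 N, min (N / b ^ i) (b ^ (i + r)) := by
  classical
  set S := {n : ℕ | n ≤ N ∧ ∃ b : ℕ, IsKPalin b k n} with hSdef
  set bs : ℕ → ℕ := fun n => if h : ∃ b : ℕ, IsKPalin b k n then Classical.choose h else 0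
    with hbsdef
  have hbs : ∀ n ∈ S, IsKPalin (bs n) k n := by
    intro n hn
    obtain ⟨-, hex⟩ := hn
    simp only [hbsdef, dif_pos hex]
    exact Classical.choose_spec hex
  set f : ℕ → ℕ × ℕ := fun n => (bs n, n / (bs n) ^ i) with hfdef
  set T : Finset (ℕ × ℕ) := (Finset.Icc 2 N).biUnion
    (fun b => {b} ×ˢ Finset.Icc (b ^ (i + r - 1)) (min (N / b ^ i) (b ^ (i + r) - 1))) with hTdef
  have himg : ∀ n ∈ S, f n ∈ T := by
    intro n hn
    have hp := hbs n hn
    obtain ⟨hlow, hupp, hble⟩ := palin_facts hk hi hkir hp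
    have hnN : n ≤ N := hn.1
    have hfn : f n = (bs n, n / bs n ^ i) := rfl
    simp only [hTdef, Finset.mem_biUnion, hfn]
    refine ⟨bs n, Finset.mem_Icc.mpr ⟨hp.1, le_trans hble hnN⟩, ?_⟩
    rw [Finset.mem_product]
    refine ⟨Finset.mem_singleton_self _, Finset.mem_Icc.mpr ⟨hlow, le_min ?_ (by omega)⟩⟩
    exact Nat.div_le_div_right hnN
  have hinj : Set.InjOn f S := by
    intro n1 h1 n2 h2 heq
    have hp1 := hbs n1 h1
    have hp2 := hbs n2 h2
    have hbeq : bs n1 = bs n2 := congrArg Prod.fst heq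
    have hmeq : n1 / (bs n1) ^ i = n2 / (bs n2) ^ i := congrArg Prod.snd heq
    have e1 := recon hp1.1 hkir hr hi hp1.2.1 hp1.2.2
    have e2 := recon hp2.1 hkir hr hi hp2.2.1 hp2.2.2
    rw [hbeq] at e1 hmeq
    rw [hmeq] at e1
    exact e1.symm.trans e2
  have h1 : S.ncard = (f '' S).ncard := (Set.ncard_image_of_injOn hinj).symm
  have h2 : (f '' S).ncard ≤ T.card := by
    rw [← Set.ncard_coe_finset]
    apply Set.ncard_le_ncard _ T.finite_toSet
    rintro _ ⟨n, hn, rfl⟩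
    exact himg n hn
  have h3 : T.card ≤ ∑ b ∈ Finset.Icc 2 N, min (N / b ^ i) (b ^ (i + r)) := by
    refine le_trans (Finset.card_biUnion_le) (Finset.sum_le_sum ?_)
    intro b hb
    rw [Finset.card_product, Finset.card_singleton, one_mul, Nat.card_Icc]
    have hb2 : 2 ≤ b := (Finset.mem_Icc.mp hb).1
    have hpow1 : 1 ≤ b ^ (i + r - 1) := Nat.one_le_pow _ _ (by omega)
    have hpow2 : 1 ≤ b ^ (i + r) := Nat.one_le_pow _ _ (by omega)
    generalize N / b ^ i = A at *
    generalize b ^ (i + r) = C at *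
    generalize b ^ (i + r - 1) = P at *
    omega
  omega

set_option maxHeartbeats 1000000 in
lemma analytic (k i r N : ℕ) (hk : 4 ≤ k) (hr : r ≤ 1) (hi : 2 ≤ i)
    (hkir : k = 2 * i + r) (hN : 1 ≤ N) :
    (∑ b ∈ Finset.Icc 2 N, ((min (N / b ^ i) (b ^ (i + r)) : ℕ) : ℝ))
      ≤ 4 * ((N : ℝ) + 1) ^ (((i : ℝ) + r + 1) / k) := by
  have hk0 : (0:ℝ) < (k:ℝ) := by exact_mod_cast (by omega : 0 < k)
  have hN2 : (2:ℝ) ≤ (N:ℝ) + 1 := by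
    have : (1:ℝ) ≤ (N:ℝ) := by exact_mod_cast hN
    linarith
  set B : ℝ := ((N:ℝ) + 1) ^ ((1:ℝ)/(k:ℝ)) with hB
  have hB1 : 1 < B := by
    rw [hB]
    apply Real.one_lt_rpow_iff_of_pos (by linarith) |>.mpr
    left
    exact ⟨by linarith, by positivity⟩
  have hB0 : (0:ℝ) < B := by linarith
  have hBk : B ^ (k:ℕ) = (N:ℝ) + 1 := by
    rw [hB, ← Real.rpow_natCast (((N:ℝ) + 1) ^ ((1:ℝ)/(k:ℝ))) k,
      ← Real.rpow_mul (by linarith), one_div, inv_mul_cancel₀ (ne_of_gt hk0), Real.rpow_one]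
  have hBpow : ∀ j : ℕ, B ^ (j:ℕ) = ((N:ℝ) + 1) ^ ((j:ℝ)/(k:ℝ)) := by
    intro j
    rw [hB, ← Real.rpow_natCast (((N:ℝ) + 1) ^ ((1:ℝ)/(k:ℝ))) j,
      ← Real.rpow_mul (by linarith)]
    congr 1
    ring
  have hfloor1 : 1 ≤ ⌊B⌋₊ := Nat.le_floor (by push_cast; linarith)
  have hfloor0 : (0:ℝ) < (⌊B⌋₊:ℝ) := by exact_mod_cast (by omega : 0 < ⌊B⌋₊)
  have hfloorB : B / 2 ≤ (⌊B⌋₊:ℝ) := by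
    rcases le_or_gt 2 B with h | h
    · have := Nat.lt_floor_add_one B
      linarith
    · have : (1:ℝ) ≤ (⌊B⌋₊:ℝ) := by exact_mod_cast hfloor1
      linarith
  -- split the sum
  rw [← Finset.sum_filter_add_sum_filter_not (Finset.Icc 2 N) (fun b => b ^ k ≤ N + 1)]
  have hA : (∑ b ∈ (Finset.Icc 2 N).filter (fun b => b ^ k ≤ N + 1),
      ((min (N / b ^ i) (b ^ (i + r)) : ℕ) : ℝ)) ≤ B * B ^ (i + r : ℕ) := by
    have hble : ∀ b ∈ (Finset.Icc 2 N).filter (fun b => b ^ k ≤ N + 1), (b:ℝ) ≤ B := by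
      intro b hb
      obtain ⟨-, hbP⟩ := Finset.mem_filter.mp hb
      have h1 : ((b:ℝ)) ^ (k:ℕ) ≤ (N:ℝ) + 1 := by push_cast at hbP ⊢; exact_mod_cast hbP
      have h2 : ((b:ℝ)) ^ (k:ℕ) ≤ B ^ (k:ℕ) := by rw [hBk]; exact h1
      exact le_of_pow_le_pow_left₀ (by omega : k ≠ 0) (le_of_lt hB0) h2
    have hterm : ∀ b ∈ (Finset.Icc 2 N).filter (fun b => b ^ k ≤ N + 1),
        ((min (N / b ^ i) (b ^ (i + r)) : ℕ) : ℝ) ≤ B ^ (i + r : ℕ) := by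
      intro b hb
      calc ((min (N / b ^ i) (b ^ (i + r)) : ℕ) : ℝ) ≤ ((b ^ (i + r) : ℕ) : ℝ) := by
            exact_mod_cast min_le_right _ _
        _ = (b:ℝ) ^ (i + r : ℕ) := by push_cast; ring
        _ ≤ B ^ (i + r : ℕ) := pow_le_pow_left₀ (Nat.cast_nonneg b) (hble b hb) _
    have hcard : (((Finset.Icc 2 N).filter (fun b => b ^ k ≤ N + 1)).card : ℝ) ≤ B := by
      have hsub : (Finset.Icc 2 N).filter (fun b => b ^ k ≤ N + 1) ⊆ Finset.Icc 2 ⌊B⌋₊ := by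
        intro b hb
        obtain ⟨hbI, -⟩ := Finset.mem_filter.mp hb
        exact Finset.mem_Icc.mpr ⟨(Finset.mem_Icc.mp hbI).1, Nat.le_floor (hble b hb)⟩
      calc (((Finset.Icc 2 N).filter (fun b => b ^ k ≤ N + 1)).card : ℝ)
          ≤ ((Finset.Icc 2 ⌊B⌋₊).card : ℝ) := by exact_mod_cast Finset.card_le_card hsub
        _ ≤ (⌊B⌋₊ : ℝ) := by
            rw [Nat.card_Icc]
            exact_mod_cast (by omega : ⌊B⌋₊ + 1 - 2 ≤ ⌊B⌋₊)
        _ ≤ B := Nat.floor_le (le_of_lt hB0)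
    calc (∑ b ∈ (Finset.Icc 2 N).filter (fun b => b ^ k ≤ N + 1),
        ((min (N / b ^ i) (b ^ (i + r)) : ℕ) : ℝ))
        ≤ (((Finset.Icc 2 N).filter (fun b => b ^ k ≤ N + 1)).card : ℝ) * B ^ (i + r : ℕ) := by
          have := Finset.sum_le_card_nsmul _ _ _ hterm
          rwa [nsmul_eq_mul] at this
      _ ≤ B * B ^ (i + r : ℕ) := by
          apply mul_le_mul_of_nonneg_right hcard (by positivity)
  have hsub2 : (Finset.Icc 2 N).filter (fun b => ¬ b ^ k ≤ N + 1) ⊆ Finset.Icc (⌊B⌋₊ + 1) N := by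
    intro b hb
    obtain ⟨hbI, hbnP⟩ := Finset.mem_filter.mp hb
    obtain ⟨hb2, hbN⟩ := Finset.mem_Icc.mp hbI
    have hBb : B < (b:ℝ) := by
      by_contra hle
      push_neg at hle
      apply hbnP
      have h2 : ((b:ℝ)) ^ (k:ℕ) ≤ B ^ (k:ℕ) := pow_le_pow_left₀ (Nat.cast_nonneg b) hle k
      rw [hBk] at h2
      exact_mod_cast h2
    have : ⌊B⌋₊ < b := (Nat.floor_lt (le_of_lt hB0)).mpr hBb
    exact Finset.mem_Icc.mpr ⟨by omega, hbN⟩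
  have hBsum : (∑ b ∈ (Finset.Icc 2 N).filter (fun b => ¬ b ^ k ≤ N + 1),
      ((min (N / b ^ i) (b ^ (i + r)) : ℕ) : ℝ))
      ≤ (((N:ℝ) + 1) / B ^ (i - 2 : ℕ)) * (1 / (⌊B⌋₊:ℝ)) := by
    set C : ℝ := ((N:ℝ) + 1) / B ^ (i - 2 : ℕ) with hC
    have hC0 : (0:ℝ) ≤ C := by positivity
    have hstep : ∀ b ∈ (Finset.Icc 2 N).filter (fun b => ¬ b ^ k ≤ N + 1),
        ((min (N / b ^ i) (b ^ (i + r)) : ℕ) : ℝ) ≤ C * ((1:ℝ)/((b:ℝ)*((b:ℝ)-1))) := by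
      intro b hb
      obtain ⟨hbm0, hbN⟩ := Finset.mem_Icc.mp (hsub2 hb)
      have hb2 : 2 ≤ b := (Finset.mem_Icc.mp (Finset.mem_filter.mp hb).1).1
      have hBb : B ≤ (b:ℝ) := by
        have hlt : ⌊B⌋₊ < b := by omega
        have h1 : (⌊B⌋₊:ℝ) + 1 ≤ (b:ℝ) := by exact_mod_cast hlt
        linarith [Nat.lt_floor_add_one B]
      have hb2R : (2:ℝ) ≤ (b:ℝ) := by exact_mod_cast hb2
      have hbpos : (0:ℝ) < (b:ℝ) := by linarith
      have hb1pos : (0:ℝ) < (b:ℝ) - 1 := by linarith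
      have h1 : ((min (N / b ^ i) (b ^ (i + r)) : ℕ) : ℝ) ≤ ((N / b ^ i : ℕ) : ℝ) := by
        exact_mod_cast min_le_left _ _
      have h2 : ((N / b ^ i : ℕ) : ℝ) ≤ (N:ℝ) / ((b:ℝ) ^ (i:ℕ)) := by
        have h := Nat.cast_div_le (α := ℝ) (m := N) (n := b ^ i)
        push_cast at h
        exact h
      have h3 : (N:ℝ) / ((b:ℝ)^(i:ℕ)) ≤ ((N:ℝ)+1) / ((b:ℝ)^(i:ℕ)) := by
        gcongr
        linarith
      have h4 : B ^ (i-2:ℕ) * ((b:ℝ)*((b:ℝ)-1)) ≤ (b:ℝ)^(i:ℕ) := by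
        have e : (b:ℝ)^(i:ℕ) = (b:ℝ)^(i-2:ℕ) * ((b:ℝ)*(b:ℝ)) := by
          rw [← mul_assoc, ← pow_succ, ← pow_succ]
          congr 1
          omega
        calc B ^ (i-2:ℕ) * ((b:ℝ)*((b:ℝ)-1))
            ≤ (b:ℝ)^(i-2:ℕ) * ((b:ℝ)*(b:ℝ)) := by
              apply mul_le_mul (pow_le_pow_left₀ (le_of_lt hB0) hBb _) (by nlinarith)
                (by nlinarith) (by positivity)
          _ = (b:ℝ)^(i:ℕ) := e.symm
      have h5 : ((N:ℝ)+1) / ((b:ℝ)^(i:ℕ)) ≤ ((N:ℝ)+1) / (B^(i-2:ℕ) * ((b:ℝ)*((b:ℝ)-1))) := by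
        apply div_le_div_of_nonneg_left (by linarith) (by positivity) h4
      have h6 : ((N:ℝ)+1) / (B^(i-2:ℕ) * ((b:ℝ)*((b:ℝ)-1))) = C * ((1:ℝ)/((b:ℝ)*((b:ℝ)-1))) := by
        rw [hC]
        field_simp
      linarith
    have htelesum : (∑ b ∈ (Finset.Icc 2 N).filter (fun b => ¬ b ^ k ≤ N + 1),
        C * ((1:ℝ)/((b:ℝ)*((b:ℝ)-1)))) ≤ C * (1 / (⌊B⌋₊:ℝ)) := by
      rw [← Finset.mul_sum]
      apply mul_le_mul_of_nonneg_left _ hC0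
      have hsum2 : (∑ b ∈ (Finset.Icc 2 N).filter (fun b => ¬ b ^ k ≤ N + 1),
          ((1:ℝ)/((b:ℝ)*((b:ℝ)-1)))) ≤ ∑ b ∈ Finset.Icc (⌊B⌋₊ + 1) N, ((1:ℝ)/((b:ℝ)*((b:ℝ)-1))) := by
        apply Finset.sum_le_sum_of_subset_of_nonneg hsub2
        intro b hbI _
        obtain ⟨hbm0, -⟩ := Finset.mem_Icc.mp hbI
        have hb2R : (2:ℝ) ≤ (b:ℝ) := by exact_mod_cast (by omega : 2 ≤ b)
        exact div_nonneg zero_le_one (by nlinarith)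
      have heq : ((⌊B⌋₊ + 1 : ℕ):ℝ) - 1 = (⌊B⌋₊:ℝ) := by push_cast; ring
      have htel := tele (⌊B⌋₊ + 1) N (by omega)
      rw [heq] at htel
      exact le_trans hsum2 htel
    calc (∑ b ∈ (Finset.Icc 2 N).filter (fun b => ¬ b ^ k ≤ N + 1),
        ((min (N / b ^ i) (b ^ (i + r)) : ℕ) : ℝ))
        ≤ ∑ b ∈ (Finset.Icc 2 N).filter (fun b => ¬ b ^ k ≤ N + 1),
          C * ((1:ℝ)/((b:ℝ)*((b:ℝ)-1))) := Finset.sum_le_sum hstep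
      _ ≤ C * (1 / (⌊B⌋₊:ℝ)) := htelesum
  have hApow : B * B ^ (i + r : ℕ) = ((N:ℝ)+1) ^ (((i:ℝ)+(r:ℝ)+1)/(k:ℝ)) := by
    have h1 : B * B ^ (i + r : ℕ) = B ^ (i + r + 1 : ℕ) := by
      rw [pow_succ]
      ring
    rw [h1, hBpow]
    congr 1
    push_cast
    ring
  have hfin : (((N:ℝ)+1)/B^(i-2:ℕ)) * (1/(⌊B⌋₊:ℝ)) ≤ 2 * ((N:ℝ)+1) ^ (((i:ℝ)+(r:ℝ)+1)/(k:ℝ)) := by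
    have h1 : 1/(⌊B⌋₊:ℝ) ≤ 2/B := by
      rw [div_le_div_iff₀ hfloor0 hB0]
      linarith
    have h2 : (((N:ℝ)+1)/B^(i-2:ℕ)) * (1/(⌊B⌋₊:ℝ)) ≤ (((N:ℝ)+1)/B^(i-2:ℕ)) * (2/B) := by
      apply mul_le_mul_of_nonneg_left h1 (by positivity)
    have h3 : (((N:ℝ)+1)/B^(i-2:ℕ)) * (2/B) = 2 * (((N:ℝ)+1) / B ^ (i-1:ℕ)) := by
      have e : B ^ (i-1:ℕ) = B ^ (i-2:ℕ) * B := by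
        rw [← pow_succ]
        congr 1
        omega
      rw [e]
      field_simp
    have h4 : ((N:ℝ)+1) / B ^ (i-1:ℕ) = ((N:ℝ)+1) ^ (((i:ℝ)+(r:ℝ)+1)/(k:ℝ)) := by
      have e0 : ((N:ℝ)+1) / B ^ (i-1:ℕ) = ((N:ℝ)+1)^(1:ℝ) / ((N:ℝ)+1)^((((i-1:ℕ)):ℝ)/(k:ℝ)) := by
        rw [Real.rpow_one, hBpow]
      rw [e0, ← Real.rpow_sub (by linarith)]
      congr 1
      have hir : ((i-1:ℕ):ℝ) = (i:ℝ) - 1 := by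
        push_cast [Nat.cast_sub (by omega : 1 ≤ i)]
        ring
      have hkr : (k:ℝ) = 2*(i:ℝ) + (r:ℝ) := by exact_mod_cast hkir
      rw [hir]
      field_simp
      linarith
    rw [h3, h4] at h2
    linarith
  have hpos : (0:ℝ) ≤ ((N:ℝ)+1) ^ (((i:ℝ)+(r:ℝ)+1)/(k:ℝ)) := by positivity
  calc (∑ b ∈ (Finset.Icc 2 N).filter (fun b => b ^ k ≤ N + 1),
        ((min (N / b ^ i) (b ^ (i + r)) : ℕ) : ℝ))
      + (∑ b ∈ (Finset.Icc 2 N).filter (fun b => ¬ b ^ k ≤ N + 1),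
        ((min (N / b ^ i) (b ^ (i + r)) : ℕ) : ℝ))
      ≤ B * B ^ (i + r : ℕ) + (((N:ℝ) + 1) / B ^ (i - 2 : ℕ)) * (1 / (⌊B⌋₊:ℝ)) :=
        add_le_add hA hBsum
    _ ≤ ((N:ℝ)+1) ^ (((i:ℝ)+(r:ℝ)+1)/(k:ℝ)) + 2 * ((N:ℝ)+1) ^ (((i:ℝ)+(r:ℝ)+1)/(k:ℝ)) := by
        rw [hApow]
        linarith
    _ ≤ 4 * ((N:ℝ)+1) ^ (((i:ℝ)+(r:ℝ)+1)/(k:ℝ)) := by linarith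

theorem stmt_6 (k i r N : ℕ) (hk : 4 ≤ k) (hr : r = 0 ∨ r = 1) (hi : 2 ≤ i)
    (hkir : k = 2 * i + r) (hN : 1 ≤ N) :
    ({n : ℕ | n ≤ N ∧ ∃ b : ℕ, IsKPalin b k n}.ncard : ℝ) ≤
      4 * ((N : ℝ) + 1) ^ (((i : ℝ) + r + 1) / k) := by
  have hr' : r ≤ 1 := by omega
  have h1 := card_bound k i r N hk hr' hi hkir
  calc ({n : ℕ | n ≤ N ∧ ∃ b : ℕ, IsKPalin b k n}.ncard : ℝ)
      ≤ ((∑ b ∈ Finset.Icc 2 N, min (N / b ^ i) (b ^ (i + r)) : ℕ) : ℝ) := by exact_mod_cast h1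
    _ = ∑ b ∈ Finset.Icc 2 N, ((min (N / b ^ i) (b ^ (i + r)) : ℕ) : ℝ) := by push_cast; rfl
    _ ≤ 4 * ((N : ℝ) + 1) ^ (((i : ℝ) + r + 1) / k) := analytic k i r N hk hr' hi hkir hN
end

section
/- Fix k ≥ 4, write k = 2i + r with r ∈ {0,1}, and let b ≥ 2. For N ≥ b^{k-1}+1, if θ(b) := ⌊N/(b^{k-1}+1)⌋, then every n ≤ N that is k-palindromic in base b has leading base-b digit at most θ(b), and hence the count of such n is at most θ(b)·b^{i+r-1} ≤ N/b^i. -/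
private lemma getLast_drop' {α : Type*} (l : List α) (j : ℕ) (h : l.drop j ≠ [])
    (h' : l ≠ []) : (l.drop j).getLast h = l.getLast h' := by
  have hj : j < l.length := by
    by_contra hc
    exact h (List.drop_eq_nil_of_le (by omega))
  rw [List.getLast_eq_getElem, List.getLast_eq_getElem, List.getElem_drop]
  congr 1
  simp [List.length_drop]
  omega

theorem stmt_7 (k i r b N : ℕ) (hk : 4 ≤ k) (hr : r = 0 ∨ r = 1)
    (hkir : k = 2 * i + r) (hb : 2 ≤ b) (hN : b ^ (k - 1) + 1 ≤ N) :
    (∀ n : ℕ, n ≤ N → IsKPalin b k n →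
      ∀ d ∈ (Nat.digits b n).getLast?, d ≤ N / (b ^ (k - 1) + 1)) ∧
    {n : ℕ | n ≤ N ∧ IsKPalin b k n}.ncard ≤
      N / (b ^ (k - 1) + 1) * b ^ (i + r - 1) ∧
    N / (b ^ (k - 1) + 1) * b ^ (i + r - 1) ≤ N / b ^ i := by
  have hb1 : 1 < b := hb
  have hi2 : 2 ≤ i := by omega
  have hM : 0 < b ^ (k - 1) + 1 := Nat.succ_pos _
  set θ := N / (b ^ (k - 1) + 1) with hθ
  -- the leading digit equals n / b ^ (k-1)
  have hlead : ∀ n : ℕ, IsKPalin b k n → ∀ d ∈ (Nat.digits b n).getLast?,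
      n / b ^ (k - 1) = d := by
    rintro n ⟨-, hlen, hpal⟩ d hd
    set L := Nat.digits b n with hL
    have hsplit : L.dropLast ++ [d] = L := List.dropLast_append_getLast? d hd
    have hlen' : L.dropLast.length = k - 1 := by rw [List.length_dropLast, hlen]
    have hdropk : L.drop (k - 1) = [d] := by
      conv_lhs => rw [← hsplit]
      rw [← hlen', List.drop_left]
    rw [Nat.self_div_pow_eq_ofDigits_drop (k - 1) n hb, ← hL, hdropk,
      Nat.ofDigits_singleton]
  -- Part 1
  have part1 : ∀ n : ℕ, n ≤ N → IsKPalin b k n →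
      ∀ d ∈ (Nat.digits b n).getLast?, d ≤ θ := by
    rintro n hn hP d hd
    obtain ⟨-, hlen, hpal⟩ := hP
    set L := Nat.digits b n with hL
    have hLne : L ≠ [] := by
      intro h; rw [h] at hlen; simp at hlen; omega
    have hn0 : n ≠ 0 := by
      intro h; apply hLne; rw [hL, h]; simp
    -- first digit is also d
    have hhead : L.head? = some d := by
      conv_lhs => rw [← hpal.reverse_eq]
      rw [List.head?_reverse]
      exact hd
    have hmod : n % b = d := by
      have : L = n % b :: Nat.digits b (n / b) := by
        rw [hL]; exact Nat.digits_def' hb1 (Nat.pos_of_ne_zero hn0)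
      rw [this] at hhead
      simpa using hhead
    have e1 : n / b ^ (k - 1) = d := hlead n ⟨hb, hlen, hpal⟩ d hd
    have h3 := Nat.div_add_mod n (b ^ (k - 1))
    rw [e1] at h3
    have h4 : n % b ≤ n % b ^ (k - 1) := by
      conv_lhs => rw [← Nat.mod_mod_of_dvd n (dvd_pow_self b (by omega : k - 1 ≠ 0))]
      exact Nat.mod_le _ _
    have e2 : b ^ (k - 1) * d + d ≤ n := by
      calc b ^ (k - 1) * d + d ≤ b ^ (k - 1) * d + n % b ^ (k - 1) := by
            rw [← hmod]; exact Nat.add_le_add_left h4 _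
        _ = n := h3
    rw [hθ]
    rw [Nat.le_div_iff_mul_le hM]
    calc d * (b ^ (k - 1) + 1) = b ^ (k - 1) * d + d := by ring
      _ ≤ n := e2
      _ ≤ N := hn
  refine ⟨part1, ?_, ?_⟩
  · -- counting part
    set X := b ^ (i + r - 1) with hX
    -- digits of n / b^i
    have hdig : ∀ n : ℕ, IsKPalin b k n →
        Nat.digits b (n / b ^ i) = (Nat.digits b n).drop i := by
      rintro n ⟨-, hlen, hpal⟩
      have hn0 : n ≠ 0 := by
        intro h; rw [h] at hlen; simp at hlen; omega
      have hLne : Nat.digits b n ≠ [] := Nat.digits_ne_nil_iff_ne_zero.mpr hn0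
      have hdropne : (Nat.digits b n).drop i ≠ [] := by
        intro h
        have : ((Nat.digits b n).drop i).length = (Nat.digits b n).length - i := List.length_drop
        rw [h, hlen] at this
        simp at this
        omega
      rw [Nat.self_div_pow_eq_ofDigits_drop i n hb]
      apply Nat.digits_ofDigits b hb1
      · intro l hl
        exact Nat.digits_lt_base hb (List.mem_of_mem_drop hl)
      · intro hne
        rw [getLast_drop' _ _ hne hLne]
        exact Nat.getLast_digit_ne_zero b hn0
    -- reconstruction of n from n / b^i
    have key : ∀ n : ℕ, IsKPalin b k n →
        n = Nat.ofDigits b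
          (((Nat.digits b (n / b ^ i)).drop r).reverse ++ Nat.digits b (n / b ^ i)) := by
      rintro n hP
      obtain ⟨-, hlen, hpal⟩ := hP
      set L := Nat.digits b n with hL
      have h1 : L.take i = (L.drop (i + r)).reverse := by
        conv_lhs => rw [← hpal.reverse_eq]
        rw [List.take_reverse]
        congr 2
        omega
      have h2 : (L.drop i).drop r = L.drop (i + r) := by
        rw [List.drop_drop]
      rw [hdig n ⟨hb, hlen, hpal⟩, ← hL, h2, ← h1, List.take_append_drop, hL,
        Nat.ofDigits_digits]
    -- map n ↦ n / b^i injectively into Ico X ((θ+1)*X)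
    have hcard : {n : ℕ | n ≤ N ∧ IsKPalin b k n}.ncard ≤
        (↑(Finset.Ico X ((θ + 1) * X)) : Set ℕ).ncard := by
      apply Set.ncard_le_ncard_of_injOn (fun n => n / b ^ i)
      · rintro n ⟨hn, hP⟩
        obtain ⟨-, hlen, hpal⟩ := hP
        have hdg := hdig n ⟨hb, hlen, hpal⟩
        have hlen2 : (Nat.digits b (n / b ^ i)).length = i + r := by
          rw [hdg, List.length_drop, hlen]; omega
        have hm0 : n / b ^ i ≠ 0 := by
          intro h
          rw [h] at hlen2; simp at hlen2; omega
        simp only [Finset.coe_Ico, Set.mem_Ico]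
        constructor
        · -- lower bound
          have := Nat.base_pow_length_digits_le b (n / b ^ i) hb1 hm0
          rw [hlen2] at this
          have heq : b ^ (i + r) = b * X := by
            rw [hX, ← pow_succ']
            congr 1
            omega
          rw [heq] at this
          exact Nat.le_of_mul_le_mul_left this (by omega)
        · -- upper bound
          have hLne : Nat.digits b n ≠ [] := by
            intro h; rw [h] at hlen; simp at hlen; omega
          have hd : (Nat.digits b n).getLast hLne ∈ (Nat.digits b n).getLast? :=
            List.getLast?_eq_getLast hLne ▸ rfl
          have hdθ : (Nat.digits b n).getLast hLne ≤ θ := part1 n hn ⟨hb, hlen, hpal⟩ _ hd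
          have e1 : n / b ^ i / X = (Nat.digits b n).getLast hLne := by
            rw [Nat.div_div_eq_div_mul, hX, ← pow_add,
              show i + (i + r - 1) = k - 1 by omega]
            exact hlead n ⟨hb, hlen, hpal⟩ _ hd
          have hXpos : 0 < X := pow_pos (by omega) _
          calc n / b ^ i = X * (n / b ^ i / X) + n / b ^ i % X :=
                (Nat.div_add_mod _ _).symm
            _ < X * θ + X := by
                apply Nat.add_lt_add_of_le_of_lt
                · exact Nat.mul_le_mul_left X (e1 ▸ hdθ)
                · exact Nat.mod_lt _ hXpos
            _ = (θ + 1) * X := by ring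
      · rintro x ⟨hx, hPx⟩ y ⟨hy, hPy⟩ hxy
        have hxy' : x / b ^ i = y / b ^ i := hxy
        exact (key x hPx).trans (by rw [hxy']; exact (key y hPy).symm)
    rw [Set.ncard_coe_finset, Nat.card_Ico] at hcard
    calc {n : ℕ | n ≤ N ∧ IsKPalin b k n}.ncard ≤ (θ + 1) * X - X := hcard
      _ = θ * X := by rw [add_mul, one_mul, Nat.add_sub_cancel]
  · -- final inequality
    rw [Nat.le_div_iff_mul_le (pow_pos (by omega : 0 < b) i)]
    calc θ * b ^ (i + r - 1) * b ^ i = θ * b ^ (k - 1) := by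
          rw [mul_assoc, ← pow_add, show i + r - 1 + i = k - 1 by omega]
      _ ≤ θ * (b ^ (k - 1) + 1) := Nat.mul_le_mul_left θ (by omega)
      _ ≤ N := Nat.div_mul_le_self N _
end

section
/- For every u ≥ 1, the number n := 2^{2u+1} satisfies μ₂(n) ≥ u: for each pair (v,w) with v < w, v + w = 2u+1, and 2^v < 2^w - 1, n is 2-palindromic in base 2^w - 1 with both digits equal to 2^v. -/
lemma digits_pair (b a : ℕ) (hb : 2 ≤ b) (ha : 0 < a) (hab : a < b) :
    Nat.digits b (a * b + a) = [a, a] := by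
  have h1 : 1 < b := hb
  have hre : a * b + a = a + a * b := by ring
  rw [Nat.digits_def' h1 (by positivity)]
  have hm : (a * b + a) % b = a := by
    rw [hre, Nat.add_mul_mod_self_right, Nat.mod_eq_of_lt hab]
  have hd : (a * b + a) / b = a := by
    rw [hre, Nat.add_mul_div_right _ _ (by omega : 0 < b), Nat.div_eq_of_lt hab]
    omega
  rw [hm, hd, Nat.digits_def' h1 ha, Nat.mod_eq_of_lt hab,
    Nat.div_eq_of_lt hab, Nat.digits_zero]

lemma key (u v w : ℕ) (hvw : v < w) (hsum : v + w = 2 * u + 1)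
    (hd : 2 ^ v < 2 ^ w - 1) :
    Nat.digits (2 ^ w - 1) (2 ^ (2 * u + 1)) = [2 ^ v, 2 ^ v] ∧
    IsKPalin (2 ^ w - 1) 2 (2 ^ (2 * u + 1)) := by
  have hw1 : 1 ≤ 2 ^ w := Nat.one_le_two_pow
  have hv1 : 1 ≤ 2 ^ v := Nat.one_le_two_pow
  have hb2 : 2 ≤ 2 ^ w - 1 := by omega
  have hn : 2 ^ (2 * u + 1) = 2 ^ v * (2 ^ w - 1) + 2 ^ v := by
    have h2 : 2 ^ w = (2 ^ w - 1) + 1 := by omega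
    calc 2 ^ (2 * u + 1) = 2 ^ v * 2 ^ w := by rw [← pow_add, hsum]
      _ = 2 ^ v * ((2 ^ w - 1) + 1) := by rw [← h2]
      _ = 2 ^ v * (2 ^ w - 1) + 2 ^ v := by ring
  have hdig := digits_pair (2 ^ w - 1) (2 ^ v) hb2 hv1 hd
  rw [hn]
  refine ⟨hdig, hb2, by rw [hdig]; rfl, by rw [hdig]; exact List.Palindrome.of_reverse_eq rfl⟩

theorem stmt_11 (u : ℕ) (hu : 1 ≤ u) :
    (∀ v w : ℕ, v < w → v + w = 2 * u + 1 → 2 ^ v < 2 ^ w - 1 →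
      Nat.digits (2 ^ w - 1) (2 ^ (2 * u + 1)) = [2 ^ v, 2 ^ v] ∧
      IsKPalin (2 ^ w - 1) 2 (2 ^ (2 * u + 1))) ∧
    u ≤ {b : ℕ | IsKPalin b 2 (2 ^ (2 * u + 1))}.ncard := by
  constructor
  · exact fun v w h1 h2 h3 => key u v w h1 h2 h3
  · set S := {b : ℕ | IsKPalin b 2 (2 ^ (2 * u + 1))} with hS
    have hfin : S.Finite := by
      apply Set.Finite.subset (Set.finite_Iic (2 ^ (2 * u + 1)))
      intro b hb
      obtain ⟨hb2, hlen, _⟩ := hb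
      have h := Nat.base_pow_length_digits_le b (2 ^ (2 * u + 1)) (by omega)
        (pow_ne_zero _ two_ne_zero)
      rw [hlen] at h
      have hb0 : 0 < b := by omega
      have : b * b ≤ b * 2 ^ (2 * u + 1) := by nlinarith [sq_nonneg b]
      exact Nat.le_of_mul_le_mul_left this hb0
    have hsub : ↑((Finset.Ioc u (2 * u)).image (fun w => 2 ^ w - 1)) ⊆ S := by
      intro b hb
      simp only [Finset.coe_image, Set.mem_image, Finset.mem_coe, Finset.mem_Ioc] at hb
      obtain ⟨w, ⟨hw1, hw2⟩, rfl⟩ := hb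
      have hvw : 2 * u + 1 - w < w := by omega
      have hsum : (2 * u + 1 - w) + w = 2 * u + 1 := by omega
      have hdcond : 2 ^ (2 * u + 1 - w) < 2 ^ w - 1 := by
        have h1 : 2 * u + 1 - w + 1 ≤ w := by omega
        have h2 : 2 ^ (2 * u + 1 - w + 1) ≤ 2 ^ w := Nat.pow_le_pow_right (by norm_num) h1
        have h3 : 2 ^ (2 * u + 1 - w) ≥ 1 := Nat.one_le_two_pow
        have h4 : (2:ℕ) ^ 2 ≤ 2 ^ w := Nat.pow_le_pow_right (by norm_num) (by omega)
        rw [pow_succ] at h2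
        norm_num at h4
        omega
      exact (key u (2 * u + 1 - w) w hvw hsum hdcond).2
    have hcard : ((Finset.Ioc u (2 * u)).image (fun w => 2 ^ w - 1)).card = u := by
      rw [Finset.card_image_of_injective _ ?_, Nat.card_Ioc]
      · omega
      · intro a b hab
        simp only at hab
        have ha := Nat.one_le_two_pow (n := a)
        have hb := Nat.one_le_two_pow (n := b)
        have : (2:ℕ) ^ a = 2 ^ b := by omega
        exact Nat.pow_right_injective (by norm_num) this
    calc u = ((Finset.Ioc u (2 * u)).image (fun w => 2 ^ w - 1)).card := hcard.symm
      _ = (↑((Finset.Ioc u (2 * u)).image (fun w => 2 ^ w - 1)) : Set ℕ).ncard := by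
          rw [Set.ncard_coe_finset]
      _ ≤ S.ncard := Set.ncard_le_ncard hsub hfin
end

section
/- There exist infinitely many natural numbers n such that μ₃(n) ≥ (1/7)·log(n+1), where μ₃(n) is the number of bases b ≥ 2 in which n is 3-palindromic. -/
def IsPalin3 (b n : ℕ) : Prop :=
  2 ≤ b ∧ ∃ e f : ℕ, 0 < e ∧ e < b ∧ f < b ∧ n = e * b ^ 2 + f * b + e

noncomputable def mu3 (n : ℕ) : ℕ := {b : ℕ | IsPalin3 b n}.ncard

lemma palin_finite (n : ℕ) : {b : ℕ | IsPalin3 b n}.Finite := by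
  apply (Set.finite_Iic n).subset
  rintro b ⟨hb, e, f, he, heb, hfb, hn⟩
  have h1 : b ≤ b ^ 2 := by nlinarith
  have h2 : b ^ 2 ≤ e * b ^ 2 := Nat.le_mul_of_pos_left _ he
  simp only [Set.mem_Iic]
  omega

lemma palin_pow {i j : ℕ} (h2 : 2 ≤ i) (h3 : 2 * j + 2 ≤ 3 * i) (hij : i ≤ j) :
    IsPalin3 (2 ^ i - 1) (4 ^ j) := by
  have hb1 : 4 ≤ 2 ^ i := by
    calc (4 : ℕ) = 2 ^ 2 := rfl
    _ ≤ 2 ^ i := Nat.pow_le_pow_right (by norm_num) h2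
  obtain ⟨k, hk⟩ : ∃ k, 2 ^ i = k + 1 := ⟨2 ^ i - 1, by omega⟩
  have hbk : 2 ^ i - 1 = k := by omega
  -- f bound : 2 * 4 ^ (j - i) ≤ 2 ^ (i-1) < k
  have hhalf : 2 * 2 ^ (i - 1) = 2 ^ i := by
    rw [← pow_succ']
    congr 1
    omega
  have hfb : 2 * 4 ^ (j - i) < k := by
    have h4 : (4 : ℕ) ^ (j - i) = 2 ^ (2 * (j - i)) := by
      rw [pow_mul]; norm_num
    have hle : 2 * (j - i) + 1 ≤ i - 1 := by omega
    have : 2 * 4 ^ (j - i) = 2 ^ (2 * (j - i) + 1) := by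
      rw [h4, pow_succ']
    rw [this]
    have h5 : 2 ^ (2 * (j - i) + 1) ≤ 2 ^ (i - 1) :=
      Nat.pow_le_pow_right (by norm_num) hle
    have h6 : 2 ≤ 2 ^ (i - 1) := by
      calc (2:ℕ) = 2 ^ 1 := rfl
      _ ≤ 2 ^ (i - 1) := Nat.pow_le_pow_right (by norm_num) (by omega)
    omega
  have hepos : 0 < 4 ^ (j - i) := Nat.pow_pos (by norm_num)
  refine ⟨by omega, 4 ^ (j - i), 2 * 4 ^ (j - i), hepos, by omega, by omega, ?_⟩
  rw [hbk]
  have : 4 ^ (j - i) * (k + 1) ^ 2 = 4 ^ j := by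
    have : ((k:ℕ) + 1) ^ 2 = 4 ^ i := by
      rw [← hk, ← pow_mul, mul_comm i 2, pow_mul]; norm_num
    rw [this, ← pow_add]
    congr 1
    omega
  nlinarith [this]

lemma two_pow_sub_one_inj : Function.Injective (fun i : ℕ => 2 ^ i - 1) := by
  intro a b h
  simp only at h
  have ha : 1 ≤ 2 ^ a := Nat.one_le_two_pow
  have hb : 1 ≤ 2 ^ b := Nat.one_le_two_pow
  have : (2:ℕ) ^ a = 2 ^ b := by omega
  exact Nat.pow_right_injective (le_refl 2) this

lemma mu3_pow_ge (j : ℕ) (hj : 1 ≤ j) : j + 1 - (2 * j + 4) / 3 ≤ mu3 (4 ^ j) := by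
  set i₀ := (2 * j + 4) / 3 with hi₀
  have hT : ∀ b ∈ (Finset.Icc i₀ j).image (fun i => 2 ^ i - 1),
      b ∈ {b : ℕ | IsPalin3 b (4 ^ j)} := by
    intro b hb
    simp only [Finset.mem_image, Finset.mem_Icc] at hb
    obtain ⟨i, ⟨hi1, hi2⟩, rfl⟩ := hb
    have h2 : 2 ≤ i := by omega
    have h3 : 2 * j + 2 ≤ 3 * i := by omega
    exact palin_pow h2 h3 hi2
  have hcard : ((Finset.Icc i₀ j).image (fun i => 2 ^ i - 1)).card = j + 1 - i₀ := by
    rw [Finset.card_image_of_injective _ two_pow_sub_one_inj, Nat.card_Icc]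
  calc j + 1 - i₀ = ((Finset.Icc i₀ j).image (fun i => 2 ^ i - 1)).card := hcard.symm
  _ = (((Finset.Icc i₀ j).image (fun i => 2 ^ i - 1) : Finset ℕ) : Set ℕ).ncard :=
      (Set.ncard_coe_finset _).symm
  _ ≤ mu3 (4 ^ j) := Set.ncard_le_ncard hT (palin_finite _)

theorem stmt_12 : {n : ℕ | (1 / 7 : ℝ) * Real.log (n + 1) ≤ mu3 n}.Infinite := by
  apply Set.infinite_of_injective_forall_mem (f := fun m : ℕ => 4 ^ (m + 4))
  · intro a b h
    simp only at h
    have := Nat.pow_right_injective (by norm_num : 2 ≤ 4) h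
    omega
  · intro m
    simp only [Set.mem_setOf_eq]
    set j := m + 4 with hjdef
    have hcount := mu3_pow_ge j (by omega)
    set c := j + 1 - (2 * j + 4) / 3 with hc
    have h5 : j + 1 ≤ 5 * c := by omega
    -- real estimates
    have hlog4 : Real.log 4 ≤ 7 / 5 := by
      have h2 : Real.log 4 = 2 * Real.log 2 := by
        rw [show (4:ℝ) = 2 ^ 2 by norm_num, Real.log_pow]
        push_cast; ring
      have := Real.log_two_lt_d9
      nlinarith
    have hstep1 : Real.log ((4:ℝ) ^ j + 1) ≤ (j + 1) * Real.log 4 := by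
      have h1 : (4:ℝ) ^ j + 1 ≤ 4 ^ (j + 1) := by
        have hp : (1:ℝ) ≤ 4 ^ j := one_le_pow₀ (by norm_num)
        have hs : (4:ℝ) ^ (j + 1) = 4 ^ j * 4 := pow_succ 4 j
        linarith
      calc Real.log ((4:ℝ) ^ j + 1) ≤ Real.log ((4:ℝ) ^ (j + 1)) := by
            apply Real.log_le_log (by positivity) h1
      _ = (j + 1) * Real.log 4 := by rw [Real.log_pow]; push_cast; ring
    have hmu : (c : ℝ) ≤ (mu3 (4 ^ j) : ℝ) := by exact_mod_cast hcount
    have h5' : ((j : ℝ) + 1) ≤ 5 * c := by exact_mod_cast h5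
    have hlog4pos : 0 ≤ Real.log 4 := Real.log_nonneg (by norm_num)
    have hcast : ((4 ^ j : ℕ) : ℝ) = (4:ℝ) ^ j := by push_cast; ring
    rw [hcast]
    calc (1 / 7 : ℝ) * Real.log ((4:ℝ) ^ j + 1)
        ≤ (1 / 7) * ((j + 1) * Real.log 4) := by nlinarith [hstep1]
    _ ≤ (1 / 7) * ((j + 1) * (7 / 5)) := by
        have hj1 : (0:ℝ) ≤ (j:ℝ) + 1 := by positivity
        nlinarith
    _ = ((j : ℝ) + 1) / 5 := by ring
    _ ≤ (c : ℝ) := by linarith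
    _ ≤ (mu3 (4 ^ j) : ℝ) := hmu
end
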